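/- Under a deterministic logging policy, inverse propensity weighting cannot recover unobserved positions: if π(d,k|q) ∈ {0,1} for all (d,k) (each document shown at exactly one position per query), then the IPS-weighted loss equals the unweighted loss restricted to the observed triples, and hence the IPS-corrected model has the same set of minimizers as the uncorrected model; in particular, the model remains unidentifiable (parameters can be shifted by independent per-rank offsets Δ_k without changing the loss). -/
import Mathlib


noncomputable def sigmoid (x : ℝ) : ℝ := 1 / (1 + Real.exp (-x))

open Finset
open scoped Classical

/-- Pointwise Bernoulli cross-entropy term of the two-tower model. -/
noncomputable def bce (p z : ℝ) : ℝ :=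
  p * Real.log (sigmoid z) + (1 - p) * Real.log (1 - sigmoid z)

/-- Expected negative log-likelihood. -/
noncomputable def lossPlain {Q D K : Type*} [Fintype Q] [Fintype D] [Fintype K]
    (P : Q → ℝ) (π : Q → D → K → ℝ) (p : Q → D → K → ℝ)
    (θ : K → ℝ) (γ : Q × D → ℝ) : ℝ :=
  -∑ q : Q, P q * ∑ d : D, ∑ k : K,
    π q d k * bce (p q d k) (θ k + γ (q, d))

/-- Expected IPS-weighted negative log-likelihood, restricted to displayed
triples (`π > 0`). -/
noncomputable def lossIPS {Q D K : Type*} [Fintype Q] [Fintype D] [Fintype K]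
    (P : Q → ℝ) (π : Q → D → K → ℝ) (p : Q → D → K → ℝ)
    (θ : K → ℝ) (γ : Q × D → ℝ) : ℝ :=
  -∑ q : Q, P q * ∑ d : D, ∑ k : K,
    if 0 < π q d k then
      (1 / π q d k) * π q d k * bce (p q d k) (θ k + γ (q, d))
    else 0

/-- Under a deterministic logging policy (each document shown at exactly one
position per query, `π ∈ {0,1}`), the IPS-weighted loss coincides with the
unweighted loss, and the model remains unidentifiable: independent per-rank
shifts `Δ_k` leave the IPS loss unchanged. -/
theorem stmt_15 {Q D K : Type*} [Fintype Q] [Fintype D] [Fintype K]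
    (P : Q → ℝ) (π : Q → D → K → ℝ) (p : Q → D → K → ℝ)
    (kof : Q → D → K)
    (hdet : ∀ q d k, π q d k = if k = kof q d then 1 else 0) :
    (∀ (θ : K → ℝ) (γ : Q × D → ℝ),
        lossIPS P π p θ γ = lossPlain P π p θ γ) ∧
    (∀ (Δ : K → ℝ) (θ : K → ℝ) (γ : Q × D → ℝ),
        lossIPS P π p (fun k => θ k + Δ k)
            (fun qd => γ qd - Δ (kof qd.1 qd.2)) =
          lossIPS P π p θ γ) := by
  constructor
  · intro θ γ
    unfold lossIPS lossPlain
    congr 1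
    refine Finset.sum_congr rfl fun q _ => ?_
    congr 1
    refine Finset.sum_congr rfl fun d _ => ?_
    refine Finset.sum_congr rfl fun k _ => ?_
    rw [hdet]
    by_cases h : k = kof q d <;> simp [h]
  · intro Δ θ γ
    unfold lossIPS
    congr 1
    refine Finset.sum_congr rfl fun q _ => ?_
    congr 1
    refine Finset.sum_congr rfl fun d _ => ?_
    refine Finset.sum_congr rfl fun k _ => ?_
    rw [hdet]
    by_cases h : k = kof q d <;> simp [h]
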